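/- arXiv:1007.4823 — 5 statements merged into one kernel-verified Lean document; each statement's English description precedes it below -/
import Mathlib

section
/- Let m ≥ 0 be an integer and λ ∈ ℤ. For every formal power series Φ(z,X) ∈ 𝓕[[X]] and all α, α' ∈ GL⁺(2,ℝ), one has (Φ |^J_λ α) |^J_λ α' = Φ |^J_λ (αα'); that is, the operation |^J_λ defines a right action of GL⁺(2,ℝ) on 𝓕[[X]]. -/
noncomputable section

open Complex Polynomial

/-- The upper half plane `ℍ`, as a subset of `ℂ`. -/
def UHP : Set ℂ := {z : ℂ | 0 < z.im}

/-- `SL(2, ℝ)`. -/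
abbrev SL2R := Matrix.SpecialLinearGroup (Fin 2) ℝ

/-- `GL⁺(2, ℝ)`, the group of real 2×2 matrices of positive determinant. -/
abbrev GL2P := Matrix.GLPos (Fin 2) ℝ

/-- Topology on `SL(2,ℝ)` induced from the space of matrices (used to speak of
discrete subgroups of `SL(2,ℝ)`). -/
instance : TopologicalSpace SL2R :=
  TopologicalSpace.induced (fun g : SL2R => (g : Matrix (Fin 2) (Fin 2) ℝ)) inferInstance

/-- A function belongs to `𝓕` if it is holomorphic on the upper half plane. -/
def Hol (f : ℂ → ℂ) : Prop := DifferentiableOn ℂ f UHP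

/-- `𝔍(γ, z) = cz + d` for `γ ∈ SL(2, ℝ)`. -/
def jJ (γ : SL2R) (z : ℂ) : ℂ := (γ 1 0 : ℝ) * z + (γ 1 1 : ℝ)

/-- `𝔎(γ, z) = c/(cz + d)` for `γ ∈ SL(2, ℝ)`. -/
def kK (γ : SL2R) (z : ℂ) : ℂ := (γ 1 0 : ℝ) / jJ γ z

/-- `γ z = (az+b)/(cz+d)` for `γ ∈ SL(2, ℝ)`. -/
def mact (γ : SL2R) (z : ℂ) : ℂ := ((γ 0 0 : ℝ) * z + (γ 0 1 : ℝ)) / jJ γ z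

/-- The underlying real matrix of an element of `GL⁺(2, ℝ)`. -/
def gmat (α : GL2P) : Matrix (Fin 2) (Fin 2) ℝ :=
  ((α : Matrix.GeneralLinearGroup (Fin 2) ℝ) : Matrix (Fin 2) (Fin 2) ℝ)

/-- The determinant of an element of `GL⁺(2, ℝ)`. -/
def gdet (α : GL2P) : ℝ := (gmat α).det

/-- `𝔍(α, z) = cz + d` for `α ∈ GL⁺(2, ℝ)`. -/
def gJ (α : GL2P) (z : ℂ) : ℂ := (gmat α 1 0 : ℝ) * z + (gmat α 1 1 : ℝ)

/-- `𝔎(α, z) = c/(cz + d)` for `α ∈ GL⁺(2, ℝ)`. -/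
def gK (α : GL2P) (z : ℂ) : ℂ := (gmat α 1 0 : ℝ) / gJ α z

/-- `α z = (az+b)/(cz+d)` for `α ∈ GL⁺(2, ℝ)`. -/
def gact (α : GL2P) (z : ℂ) : ℂ := ((gmat α 0 0 : ℝ) * z + (gmat α 0 1 : ℝ)) / gJ α z

/-- `(det α)^(μ/2)` for `α ∈ GL⁺(2, ℝ)` and `μ ∈ ℤ`. -/
def detpow (α : GL2P) (μ : ℤ) : ℂ := ((gdet α ^ ((μ : ℝ) / 2) : ℝ) : ℂ)

/-- The weight-`ξ` action `F ∥_ξ γ` of `SL(2,ℝ)` on polynomials over `𝓕`: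
`(F ∥_ξ γ)(z, X) = 𝔍(γ,z)^(-ξ) F(γz, 𝔍(γ,z)^2 (X - 𝔎(γ,z)))`. -/
def polyAct (ξ : ℤ) (F : ℂ → Polynomial ℂ) (γ : SL2R) : ℂ → Polynomial ℂ := fun z =>
  Polynomial.C (jJ γ z ^ (-ξ)) *
    (F (mact γ z)).comp (Polynomial.C (jJ γ z ^ 2) * (Polynomial.X - Polynomial.C (kK γ z)))

/-- The weight-`ξ` action `F ∥_ξ α` of `GL⁺(2,ℝ)` on polynomials over `𝓕`:
`(F ∥_ξ α)(z, X) = (det α)^(ξ/2) 𝔍(α,z)^(-ξ) F(αz, (det α)⁻¹ 𝔍(α,z)^2 (X - 𝔎(α,z)))`. -/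
def polyActG (ξ : ℤ) (F : ℂ → Polynomial ℂ) (α : GL2P) : ℂ → Polynomial ℂ := fun z =>
  Polynomial.C (detpow α ξ * gJ α z ^ (-ξ)) *
    (F (gact α z)).comp
      (Polynomial.C ((gdet α : ℂ)⁻¹ * gJ α z ^ 2) * (Polynomial.X - Polynomial.C (gK α z)))

/-- The weight-`l` action `Φ |^J_l γ` of `SL(2,ℝ)` on formal power series over `𝓕`:
`(Φ |^J_l γ)(z, X) = 𝔍(γ,z)^(-l) e^(-𝔎(γ,z) X) Φ(γz, 𝔍(γ,z)^(-2) X)`. -/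
def psAct (l : ℤ) (Φ : ℂ → PowerSeries ℂ) (γ : SL2R) : ℂ → PowerSeries ℂ := fun z =>
  PowerSeries.C (jJ γ z ^ (-l)) *
    (PowerSeries.mk fun n => (-(kK γ z)) ^ n / (n.factorial : ℂ)) *
    PowerSeries.rescale (jJ γ z ^ (-2 : ℤ)) (Φ (mact γ z))

/-- The weight-`l` action `Φ |^J_l α` of `GL⁺(2,ℝ)` on formal power series over `𝓕`:
`(Φ |^J_l α)(z, X) = (det α)^(l/2) 𝔍(α,z)^(-l) e^(-𝔎(α,z) X) Φ(αz, (det α) 𝔍(α,z)^(-2) X)`. -/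
def psActG (l : ℤ) (Φ : ℂ → PowerSeries ℂ) (α : GL2P) : ℂ → PowerSeries ℂ := fun z =>
  PowerSeries.C (detpow α l * gJ α z ^ (-l)) *
    (PowerSeries.mk fun n => (-(gK α z)) ^ n / (n.factorial : ℂ)) *
    PowerSeries.rescale ((gdet α : ℂ) * gJ α z ^ (-2 : ℤ)) (Φ (gact α z))

/-- The map `Π^δ_m`: for `Φ(z,X) = Σ_k φ_k(z) X^(k+δ)`,
`(Π^δ_m Φ)(z, X) = Σ_{r=0}^m (1/r!) φ_(m-r)(z) X^r`. -/
def PiDM (δ m : ℕ) (Φ : ℂ → PowerSeries ℂ) : ℂ → Polynomial ℂ := fun z =>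
  ∑ r ∈ Finset.range (m + 1),
    Polynomial.C ((PowerSeries.coeff (m - r + δ) (Φ z)) / (r.factorial : ℂ)) *
      Polynomial.X ^ r

/-- Membership in `𝓕_m[X]`: degree at most `m` and holomorphic coefficients. -/
def InFmX (m : ℕ) (F : ℂ → Polynomial ℂ) : Prop :=
  (∀ z : ℂ, (F z).degree ≤ (m : WithBot ℕ)) ∧ ∀ r : ℕ, Hol fun z => (F z).coeff r

/-- Membership in `𝓕[[X]]_δ = X^δ 𝓕[[X]]` with holomorphic coefficients. -/
def InFXd (δ : ℕ) (Φ : ℂ → PowerSeries ℂ) : Prop :=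
  (∀ z : ℂ, ∀ k < δ, PowerSeries.coeff k (Φ z) = 0) ∧
    ∀ k : ℕ, Hol fun z => PowerSeries.coeff k (Φ z)

/-- `QP^m_ξ(Γ)`: quasimodular polynomials of weight `ξ` and degree at most `m` for `Γ`. -/
def IsQP (Γ : Subgroup SL2R) (ξ : ℤ) (m : ℕ) (F : ℂ → Polynomial ℂ) : Prop :=
  InFmX m F ∧ ∀ γ ∈ Γ, ∀ z ∈ UHP, polyAct ξ F γ z = F z

/-- `J_l(Γ)_δ`: Jacobi-like forms of weight `l` for `Γ` lying in `𝓕[[X]]_δ`. -/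
def IsJF (Γ : Subgroup SL2R) (l : ℤ) (δ : ℕ) (Φ : ℂ → PowerSeries ℂ) : Prop :=
  InFXd δ Φ ∧ ∀ γ ∈ Γ, ∀ z ∈ UHP, psAct l Φ γ z = Φ z

/-- `M_μ(Γ)`: modular forms of weight `μ` for `Γ` (cusp conditions suppressed). -/
def IsModular (Γ : Subgroup SL2R) (μ : ℤ) (f : ℂ → ℂ) : Prop :=
  Hol f ∧ ∀ γ ∈ Γ, ∀ z ∈ UHP, jJ γ z ^ (-μ) * f (mact γ z) = f z

/-- `QM^m_ξ(Γ)`: quasimodular forms of weight `ξ` and depth at most `m` for `Γ`. -/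
def IsQM (Γ : Subgroup SL2R) (ξ : ℤ) (m : ℕ) (f : ℂ → ℂ) : Prop :=
  Hol f ∧ ∃ g : ℕ → ℂ → ℂ, (∀ r, Hol (g r)) ∧
    ∀ γ ∈ Γ, ∀ z ∈ UHP,
      jJ γ z ^ (-ξ) * f (mact γ z) = ∑ r ∈ Finset.range (m + 1), g r z * kK γ z ^ r

/-- The factorial `t!` of an integer `t` (equal to `(t.toNat)!`; intended for `t ≥ 0`). -/
def zfact (t : ℤ) : ℂ := (t.toNat.factorial : ℂ)


open Matrix in
lemma gmat_mul (α α' : GL2P) : gmat (α * α') = gmat α * gmat α' := rfl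

lemma gdet_pos (α : GL2P) : 0 < gdet α := by
  have := α.prop
  rw [Matrix.mem_glpos] at this
  simpa [gdet, gmat] using this

lemma gdet_mul (α α' : GL2P) : gdet (α * α') = gdet α * gdet α' := by
  simp [gdet, gmat_mul, Matrix.det_mul]

lemma gJ_ne_zero (α : GL2P) {z : ℂ} (hz : 0 < z.im) : gJ α z ≠ 0 := by
  intro h
  have him : (gJ α z).im = 0 := by rw [h]; rfl
  have hre : (gJ α z).re = 0 := by rw [h]; rfl
  simp [gJ, Complex.add_im, Complex.mul_im] at him hre
  rcases eq_or_ne (gmat α 1 0) 0 with hc | hc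
  · have hd : gmat α 1 1 = 0 := by simpa [hc] using hre
    have := gdet_pos α
    rw [gdet, Matrix.det_fin_two, hc, hd] at this
    simp at this
  · have : gmat α 1 0 * z.im = 0 := by simpa [hc] using him
    rcases mul_eq_zero.1 this with h' | h'
    · exact hc h'
    · exact hz.ne' h'
lemma im_gact (α : GL2P) {z : ℂ} (hz : 0 < z.im) : 0 < (gact α z).im := by
  have hJ : gJ α z ≠ 0 := gJ_ne_zero α hz
  have hns : 0 < Complex.normSq (gJ α z) := Complex.normSq_pos.2 hJ
  have him : (gact α z).im = gdet α * z.im / Complex.normSq (gJ α z) := by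
    rw [gact, Complex.div_im]
    simp only [gJ, gdet, Matrix.det_fin_two, Complex.add_im, Complex.add_re, Complex.mul_im,
      Complex.mul_re, Complex.ofReal_im, Complex.ofReal_re]
    field_simp
    ring
  rw [him]
  exact div_pos (mul_pos (gdet_pos α) hz) hns
section PureAux
variable (A B C D A' B' C' D' z : ℂ)

lemma auxJ (h' : C' * z + D' ≠ 0) :
    (C * A' + D * C') * z + (C * B' + D * D') =
      (C * ((A' * z + B') / (C' * z + D')) + D) * (C' * z + D') := by
  field_simp
  ring

lemma auxW (h' : C' * z + D' ≠ 0)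
    (h12 : (C * A' + D * C') * z + (C * B' + D * D') ≠ 0) :
    C * ((A' * z + B') / (C' * z + D')) + D ≠ 0 := by
  intro h
  rw [auxJ C D A' B' C' D' z h', h, zero_mul] at h12
  exact h12 rfl

lemma auxAct (h' : C' * z + D' ≠ 0)
    (h12 : (C * A' + D * C') * z + (C * B' + D * D') ≠ 0) :
    ((A * A' + B * C') * z + (A * B' + B * D')) /
        ((C * A' + D * C') * z + (C * B' + D * D')) =
      (A * ((A' * z + B') / (C' * z + D')) + B) /
        (C * ((A' * z + B') / (C' * z + D')) + D) := by
  have hw := auxW C D A' B' C' D' z h' h12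
  rw [div_eq_div_iff h12 hw]
  field_simp
  ring

lemma auxK (h' : C' * z + D' ≠ 0)
    (h12 : (C * A' + D * C') * z + (C * B' + D * D') ≠ 0) :
    (C * A' + D * C') / ((C * A' + D * C') * z + (C * B' + D * D')) =
      C' / (C' * z + D') +
        (A' * D' - B' * C') * (C' * z + D') ^ (-2 : ℤ) *
          (C / (C * ((A' * z + B') / (C' * z + D')) + D)) := by
  have hw := auxW C D A' B' C' D' z h' h12
  have hJw : C * ((A' * z + B') / (C' * z + D')) + D =
      ((C * A' + D * C') * z + (C * B' + D * D')) / (C' * z + D') := by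
    rw [eq_div_iff h', auxJ C D A' B' C' D' z h']
  rw [hJw, div_div_eq_mul_div, zpow_neg]
  rw [show ((C' * z + D') ^ (2 : ℤ)) = (C' * z + D') ^ (2 : ℕ) by norm_cast]
  field_simp
  ring

end PureAux
lemma gJ_mul (α α' : GL2P) {z : ℂ} (hz : 0 < z.im) :
    gJ (α * α') z = gJ α (gact α' z) * gJ α' z := by
  have h' : gJ α' z ≠ 0 := gJ_ne_zero α' hz
  simp only [gJ] at h'
  simp only [gJ, gact, gmat_mul, Matrix.mul_apply, Fin.sum_univ_two]
  push_cast
  exact auxJ _ _ _ _ _ _ _ h'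

lemma gact_mul (α α' : GL2P) {z : ℂ} (hz : 0 < z.im) :
    gact (α * α') z = gact α (gact α' z) := by
  have h' : gJ α' z ≠ 0 := gJ_ne_zero α' hz
  have h12 : gJ (α * α') z ≠ 0 := gJ_ne_zero (α * α') hz
  simp only [gJ] at h'
  simp only [gJ, gmat_mul, Matrix.mul_apply, Fin.sum_univ_two] at h12
  push_cast at h12
  simp only [gact, gJ, gmat_mul, Matrix.mul_apply, Fin.sum_univ_two]
  push_cast
  exact auxAct _ _ _ _ _ _ _ _ _ h' h12

lemma gK_mul (α α' : GL2P) {z : ℂ} (hz : 0 < z.im) :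
    gK (α * α') z = gK α' z + (gdet α' : ℂ) * gJ α' z ^ (-2 : ℤ) * gK α (gact α' z) := by
  have h' : gJ α' z ≠ 0 := gJ_ne_zero α' hz
  have h12 : gJ (α * α') z ≠ 0 := gJ_ne_zero (α * α') hz
  simp only [gJ] at h'
  simp only [gJ, gmat_mul, Matrix.mul_apply, Fin.sum_univ_two] at h12
  push_cast at h12
  simp only [gK, gact, gJ, gdet, Matrix.det_fin_two, gmat_mul, Matrix.mul_apply,
    Fin.sum_univ_two]
  push_cast
  exact auxK _ _ _ _ _ _ _ h' h12
lemma detpow_mul (α α' : GL2P) (l : ℤ) :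
    detpow (α * α') l = detpow α l * detpow α' l := by
  rw [detpow, detpow, detpow, gdet_mul,
    Real.mul_rpow (gdet_pos α).le (gdet_pos α').le]
  push_cast
  ring

open PowerSeries in
lemma mkExp (x : ℂ) :
    (PowerSeries.mk fun n => x ^ n / (n.factorial : ℂ)) = rescale x (exp ℂ) := by
  ext n
  rw [coeff_rescale, coeff_exp, coeff_mk]
  rw [map_div₀, map_one, map_natCast]
  rw [div_eq_mul_inv, div_eq_mul_inv, one_mul]

open PowerSeries in
lemma rescale_C' (a c : ℂ) : rescale a (PowerSeries.C c) = PowerSeries.C c := by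
  ext n
  rw [coeff_rescale, PowerSeries.coeff_C]
  split_ifs with h
  · simp [h]
  · simp

-- STATEMENT 0
open PowerSeries in
/-- The operation `|^J_λ` is a right action of `GL⁺(2,ℝ)` on `𝓕[[X]]`. -/
theorem stmt0 (l : ℤ) (Φ : ℂ → PowerSeries ℂ)
    (hΦ : ∀ k : ℕ, Hol fun z => PowerSeries.coeff k (Φ z)) (α α' : GL2P) :
    ∀ z ∈ UHP, psActG l (psActG l Φ α) α' z = psActG l Φ (α * α') z := by
  intro z hz
  have hz' : 0 < z.im := hz
  have hgact := gact_mul α α' hz'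
  have hgJ := gJ_mul α α' hz'
  have hgK := gK_mul α α' hz'
  have hdp := detpow_mul α α' l
  have hdet : ((gdet (α * α') : ℝ) : ℂ) = (gdet α : ℂ) * (gdet α' : ℂ) := by
    rw [gdet_mul]; push_cast; ring
  have hc : detpow (α * α') l * gJ (α * α') z ^ (-l) =
      detpow α' l * gJ α' z ^ (-l) * (detpow α l * gJ α (gact α' z) ^ (-l)) := by
    rw [hdp, hgJ, mul_zpow]; ring
  have hk : -gK (α * α') z =
      -gK α' z + -gK α (gact α' z) * ((gdet α' : ℂ) * gJ α' z ^ (-2 : ℤ)) := by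
    rw [hgK]; ring
  have hr : (gdet (α * α') : ℂ) * gJ (α * α') z ^ (-2 : ℤ) =
      (gdet α : ℂ) * gJ α (gact α' z) ^ (-2 : ℤ) *
        ((gdet α' : ℂ) * gJ α' z ^ (-2 : ℤ)) := by
    rw [hdet, hgJ, mul_zpow]; ring
  simp only [psActG, mkExp, map_mul, rescale_C', rescale_rescale, hgact, hc, hk, hr]
  rw [← exp_mul_exp_eq_exp_add]
  ring
end
end

section
/- Let m, δ ≥ 0 be integers and λ ∈ ℤ. For every formal power series Φ(z,X) ∈ 𝓕[[X]]_δ and every γ ∈ SL(2,ℝ), one has Π^δ_m(Φ |^J_λ γ) = (Π^δ_m Φ) ‖_{λ+2m+2δ} γ. -/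
noncomputable section

open Complex Polynomial

-- STATEMENT 2
theorem stmt2 (m δ : ℕ) (l : ℤ) (Φ : ℂ → PowerSeries ℂ) (hΦ : InFXd δ Φ) (γ : SL2R) :
    ∀ z ∈ UHP,
      PiDM δ m (psAct l Φ γ) z = polyAct (l + 2 * (m : ℤ) + 2 * (δ : ℤ)) (PiDM δ m Φ) γ z := by
  intro z hz
  have hJ : jJ γ z ≠ 0 := by
    have hdet : (γ 0 0 : ℝ) * γ 1 1 - (γ 0 1) * (γ 1 0) = 1 := by
      have := γ.2
      rwa [Matrix.det_fin_two] at this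
    intro h
    have him : (γ 1 0 : ℝ) * z.im = 0 := by
      have := congrArg Complex.im h
      simpa [jJ] using this
    have hre : (γ 1 0 : ℝ) * z.re + (γ 1 1 : ℝ) = 0 := by
      have := congrArg Complex.re h
      simpa [jJ] using this
    have hz' : (0:ℝ) < z.im := hz
    have hc : (γ 1 0 : ℝ) = 0 := by
      rcases mul_eq_zero.mp him with h' | h'
      · exact h'
      · exact absurd h' (ne_of_gt hz')
    rw [hc] at hre hdet
    simp at hre
    rw [hre] at hdet
    simp at hdet
  set J := jJ γ z with hJdef
  set K := kK γ z with hKdef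
  set w := mact γ z with hwdef
  have hφ0 : ∀ k < δ, PowerSeries.coeff k (Φ w) = 0 := fun k hk => hΦ.1 w k hk
  -- coefficients of psAct
  have hps : ∀ n : ℕ, PowerSeries.coeff n (psAct l Φ γ z) =
      J ^ (-l) * ∑ i ∈ Finset.range (n+1),
        ((-K) ^ i / (i.factorial : ℂ)) *
          ((J ^ (-2:ℤ)) ^ (n - i) * PowerSeries.coeff (n - i) (Φ w)) := by
    intro n
    rw [psAct, mul_assoc, PowerSeries.coeff_C_mul, PowerSeries.coeff_mul,
      Finset.Nat.sum_antidiagonal_eq_sum_range_succ_mk]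
    simp [PowerSeries.coeff_rescale]
    rfl
  -- coefficient s of (X - C K)^r
  have hsub : ∀ r s : ℕ, ((Polynomial.X - Polynomial.C K)^r).coeff s =
      if s ≤ r then (-K)^(r-s) * (r.choose s : ℂ) else 0 := by
    intro r s
    rw [sub_eq_add_neg, ← Polynomial.C_neg, add_pow, Polynomial.finset_sum_coeff]
    have : ∀ k ∈ Finset.range (r+1),
        (Polynomial.X ^ k * Polynomial.C (-K) ^ (r-k) * (r.choose k : Polynomial ℂ)).coeff s
        = if s = k then (-K)^(r-k) * (r.choose k : ℂ) else 0 := by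
      intro k hk
      rw [← Polynomial.C_pow, ← Polynomial.C_eq_natCast, mul_assoc, ← Polynomial.C_mul,
        mul_comm (Polynomial.X ^ k), Polynomial.coeff_C_mul, Polynomial.coeff_X_pow]
      split <;> simp
    rw [Finset.sum_congr rfl this, Finset.sum_ite_eq]
    simp [Nat.lt_succ_iff]
  -- coefficient of PiDM
  have hL : ∀ (Ψ : ℂ → PowerSeries ℂ) (s : ℕ), (PiDM δ m Ψ z).coeff s =
      if s ≤ m then PowerSeries.coeff (m - s + δ) (Ψ z) / (s.factorial : ℂ) else 0 := by
    intro Ψ s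
    rw [PiDM, Polynomial.finset_sum_coeff]
    simp only [Polynomial.coeff_C_mul, Polynomial.coeff_X_pow, mul_ite, mul_one, mul_zero]
    rw [Finset.sum_ite_eq]
    simp [Nat.lt_succ_iff]
  apply Polynomial.ext
  intro s
  rw [hL, hps (m - s + δ)]
  -- RHS
  rw [polyAct, Polynomial.coeff_C_mul, PiDM, Polynomial.sum_comp]
  simp only [Polynomial.mul_comp, Polynomial.C_comp, Polynomial.X_pow_comp, mul_pow,
    ← Polynomial.C_pow, Polynomial.finset_sum_coeff, Polynomial.coeff_C_mul]
  rw [← hJdef, ← hKdef, ← hwdef]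
  simp only [hsub]
  by_cases hs : s ≤ m
  · rw [if_pos hs]
    -- truncate LHS inner sum: terms with i > m - s vanish
    have htrunc : ∑ i ∈ Finset.range (m - s + δ + 1),
        ((-K) ^ i / (i.factorial : ℂ)) *
          ((J ^ (-2:ℤ)) ^ (m - s + δ - i) * PowerSeries.coeff (m - s + δ - i) (Φ w))
        = ∑ i ∈ Finset.range (m - s + 1),
        ((-K) ^ i / (i.factorial : ℂ)) *
          ((J ^ (-2:ℤ)) ^ (m - s + δ - i) * PowerSeries.coeff (m - s + δ - i) (Φ w)) := by
      refine (Finset.sum_subset (Finset.range_subset_range.mpr (by omega)) ?_).symm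
      intro i hi hni
      rw [Finset.mem_range] at hi hni
      rw [hφ0 (m - s + δ - i) (by omega)]
      ring
    rw [htrunc]
    -- truncate RHS sum to r ∈ [s, m] and reindex
    have hm1 : m + 1 = s + (m - s + 1) := by omega
    have hz1 : ∑ i ∈ Finset.range s,
        (PowerSeries.coeff (m - i + δ) (Φ w) / (i.factorial : ℂ)) *
          ((J ^ 2) ^ i * (if s ≤ i then (-K)^(i-s) * (i.choose s : ℂ) else 0)) = 0 := by
      refine Finset.sum_eq_zero ?_
      intro i hi
      rw [Finset.mem_range] at hi
      rw [if_neg (by omega)]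
      ring
    have hR : (∑ x ∈ Finset.range (m+1),
        (PowerSeries.coeff (m - x + δ) (Φ w) / (x.factorial : ℂ)) *
          ((J ^ 2) ^ x * (if s ≤ x then (-K)^(x-s) * (x.choose s : ℂ) else 0)))
        = ∑ i ∈ Finset.range (m - s + 1),
        (PowerSeries.coeff (m - (s+i) + δ) (Φ w) / ((s+i).factorial : ℂ)) *
          ((J ^ 2) ^ (s+i) * ((-K)^(s+i-s) * ((s+i).choose s : ℂ))) := by
      rw [hm1]
      rw [Finset.sum_range_add (fun x => (PowerSeries.coeff (m - x + δ) (Φ w) / (x.factorial : ℂ)) *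
          ((J ^ 2) ^ x * (if s ≤ x then (-K)^(x-s) * (x.choose s : ℂ) else 0))) s (m - s + 1)]
      rw [hz1, zero_add]
      refine Finset.sum_congr rfl ?_
      intro i hi
      rw [if_pos (Nat.le_add_right s i)]
    rw [hR]
    simp only [Finset.mul_sum, Finset.sum_div]
    refine Finset.sum_congr rfl ?_
    intro i hi
    rw [Finset.mem_range] at hi
    -- index arithmetic
    have hidx : m - (s + i) + δ = m - s + δ - i := by omega
    have hii : s + i - s = i := by omega
    rw [hidx, hii]
    -- now pure algebra with zpow
    have e1 : (J ^ (-2:ℤ)) ^ (m - s + δ - i) = J ^ ((-2:ℤ) * ((m - s + δ - i : ℕ) : ℤ)) := by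
      rw [zpow_mul, zpow_natCast]
    have e2 : ((J:ℂ) ^ 2) ^ (s + i) = J ^ ((2:ℤ) * ((s + i : ℕ) : ℤ)) := by
      rw [zpow_mul]
      norm_cast
    rw [e1, e2]
    have hexp : (-l) + (-2:ℤ) * ((m - s + δ - i : ℕ) : ℤ)
        = (-(l + 2 * (m:ℤ) + 2 * (δ:ℤ))) + (2:ℤ) * ((s + i : ℕ) : ℤ) := by
      push_cast
      omega
    have hJs : J ^ (-l) * J ^ ((-2:ℤ) * ((m - s + δ - i : ℕ) : ℤ))
        = J ^ (-(l + 2 * (m:ℤ) + 2 * (δ:ℤ))) * J ^ ((2:ℤ) * ((s + i : ℕ) : ℤ)) := by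
      rw [← zpow_add₀ hJ, ← zpow_add₀ hJ, hexp]
    have hc : ((s+i).choose s : ℂ) * (s.factorial : ℂ) * (i.factorial : ℂ)
        = ((s+i).factorial : ℂ) := by
      have h' : (s + i).choose s * s.factorial * i.factorial = (s+i).factorial := by
        rw [Nat.add_comm s i, Nat.mul_right_comm]
        exact Nat.add_choose_mul_factorial_mul_factorial i s
      exact_mod_cast congrArg (Nat.cast : ℕ → ℂ) h'
    have hs0 : (s.factorial : ℂ) ≠ 0 := Nat.cast_ne_zero.mpr (Nat.factorial_ne_zero s)
    have hi0 : (i.factorial : ℂ) ≠ 0 := Nat.cast_ne_zero.mpr (Nat.factorial_ne_zero i)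
    have hsi0 : ((s+i).factorial : ℂ) ≠ 0 := Nat.cast_ne_zero.mpr (Nat.factorial_ne_zero _)
    have hcomb : (s.factorial : ℂ)⁻¹ * (i.factorial : ℂ)⁻¹
        = ((s+i).choose s : ℂ) * ((s+i).factorial : ℂ)⁻¹ := by
      field_simp
      linear_combination -hc
    linear_combination hJs * ((-K)^i * PowerSeries.coeff (m - s + δ - i) (Φ w)
        * (i.factorial : ℂ)⁻¹ * (s.factorial : ℂ)⁻¹)
      + hcomb * (J ^ (-(l + 2 * (m:ℤ) + 2 * (δ:ℤ))) * J ^ ((2:ℤ) * ((s + i : ℕ) : ℤ))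
        * (-K)^i * PowerSeries.coeff (m - s + δ - i) (Φ w))
  · rw [if_neg hs]
    symm
    rw [Finset.sum_eq_zero, mul_zero]
    intro r hr
    rw [Finset.mem_range] at hr
    rw [if_neg (by omega)]
    ring
end
end

section
/- Let F(z,X) = Σ_{r=0}^m f_r(z) X^r ∈ 𝓕_m[X], let ξ ∈ ℤ and γ ∈ SL(2,ℝ). Then for each 0 ≤ r ≤ m and all z ∈ ℍ, one has (𝔖_r(F ‖_ξ γ^{−1}) |_{ξ−2r} γ)(z) = Σ_{ℓ=r}^m C(ℓ,r) f_ℓ(z) 𝔎(γ,z)^{ℓ−r}, where C(ℓ,r) denotes the binomial coefficient. -/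
noncomputable section

open Complex Polynomial

lemma coeff_comp_linear (P : Polynomial ℂ) (u v : ℂ) (r : ℕ) :
    (P.comp (Polynomial.C u * (Polynomial.X - Polynomial.C v))).coeff r =
      ∑ ℓ ∈ Finset.range (P.natDegree + 1),
        P.coeff ℓ * (u ^ ℓ * ((-v) ^ (ℓ - r) * (ℓ.choose r : ℂ))) := by
  rw [Polynomial.comp_eq_sum_left, Polynomial.sum_def, Polynomial.finset_sum_coeff]
  rw [Finset.sum_subset Polynomial.supp_subset_range_natDegree_succ
    (fun n _ hn => by simp [Polynomial.notMem_support_iff.mp hn])]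
  refine Finset.sum_congr rfl fun ℓ _ => ?_
  rw [mul_pow, ← Polynomial.C_pow, sub_eq_add_neg, ← Polynomial.C_neg]
  simp only [Polynomial.coeff_C_mul, Polynomial.coeff_X_add_C_pow]

lemma jJ_ne_zero (γ : SL2R) (z : ℂ) (hz : z ∈ UHP) : jJ γ z ≠ 0 := by
  intro h
  have hdet : (γ 0 0) * γ 1 1 - γ 0 1 * γ 1 0 = (1:ℝ) := by
    rw [← Matrix.det_fin_two]; exact γ.2
  have him : (γ 1 0 : ℝ) * z.im = 0 := by
    have := congrArg Complex.im h
    simpa [jJ] using this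
  have hc : (γ 1 0 : ℝ) = 0 := by
    rcases mul_eq_zero.mp him with h' | h'
    · exact h'
    · exact absurd h' (ne_of_gt hz)
  have hd : (γ 1 1 : ℝ) = 0 := by
    have := congrArg Complex.re h
    simp [jJ, hc] at this
    exact_mod_cast this
  rw [hc, hd] at hdet; simp at hdet

lemma inv_entries (γ : SL2R) :
    ((γ⁻¹ : SL2R) 0 0 : ℝ) = γ 1 1 ∧ ((γ⁻¹ : SL2R) 0 1 : ℝ) = -(γ 0 1) ∧
    ((γ⁻¹ : SL2R) 1 0 : ℝ) = -(γ 1 0) ∧ ((γ⁻¹ : SL2R) 1 1 : ℝ) = γ 0 0 := by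
  rw [Matrix.SpecialLinearGroup.SL2_inv_expl γ]
  refine ⟨rfl, rfl, rfl, rfl⟩

-- STATEMENT 4
theorem stmt4 (m : ℕ) (ξ : ℤ) (F : ℂ → Polynomial ℂ) (hF : InFmX m F) (γ : SL2R) :
    ∀ r ≤ m, ∀ z ∈ UHP,
      jJ γ z ^ (-(ξ - 2 * (r : ℤ))) * (polyAct ξ F γ⁻¹ (mact γ z)).coeff r =
        ∑ ℓ ∈ Finset.Icc r m, (ℓ.choose r : ℂ) * (F z).coeff ℓ * kK γ z ^ (ℓ - r) := by
  intro r hr z hz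
  have hj : jJ γ z ≠ 0 := jJ_ne_zero γ z hz
  obtain ⟨e00, e01, e10, e11⟩ := inv_entries γ
  have hdet : ((γ 0 0 : ℝ):ℂ) * ((γ 1 1 : ℝ):ℂ) - ((γ 0 1 : ℝ):ℂ) * ((γ 1 0 : ℝ):ℂ) = 1 := by
    have : (γ 0 0) * γ 1 1 - γ 0 1 * γ 1 0 = (1:ℝ) := by
      rw [← Matrix.det_fin_two]; exact γ.2
    exact_mod_cast congrArg (Complex.ofReal) this
  have hj2 : ((γ 1 0 : ℝ):ℂ) * z + ((γ 1 1 : ℝ):ℂ) ≠ 0 := by simpa [jJ] using hj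
  have hJi : jJ γ⁻¹ (mact γ z) = (jJ γ z)⁻¹ := by
    rw [jJ, e10, e11, mact]
    simp only [jJ]
    push_cast
    field_simp [hj2]
    linear_combination hdet
  have hj' : jJ γ⁻¹ (mact γ z) ≠ 0 := by rw [hJi]; exact inv_ne_zero hj
  have hmi : mact γ⁻¹ (mact γ z) = z := by
    rw [mact, hJi, e00, e01, mact]
    simp only [jJ]
    push_cast
    have hj3 : z * ((γ 1 0 : ℝ):ℂ) + ((γ 1 1 : ℝ):ℂ) ≠ 0 := by rwa [mul_comm]
    field_simp [hj2, hj3]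
    linear_combination z * hdet
  have hKi : kK γ⁻¹ (mact γ z) = -(((γ 1 0 : ℝ)):ℂ) * jJ γ z := by
    rw [kK, hJi, e10]
    push_cast
    field_simp
  simp only [polyAct]
  rw [hmi, hKi, hJi, Polynomial.coeff_C_mul, coeff_comp_linear]
  rw [← mul_assoc, Finset.mul_sum]
  have hconst : jJ γ z ^ (-(ξ - 2 * (r:ℤ))) * (jJ γ z)⁻¹ ^ (-ξ) = jJ γ z ^ ((2*r : ℕ) : ℤ) := by
    rw [inv_zpow, ← zpow_neg, ← zpow_add₀ hj]
    congr 1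
    push_cast; ring
  rw [hconst, zpow_natCast]
  have hterm : ∀ ℓ : ℕ, jJ γ z ^ (2*r) *
      ((F z).coeff ℓ * (((jJ γ z)⁻¹ ^ 2) ^ ℓ *
        ((-(-(((γ 1 0 : ℝ)):ℂ) * jJ γ z)) ^ (ℓ - r) * (ℓ.choose r : ℂ)))) =
      (ℓ.choose r : ℂ) * (F z).coeff ℓ * kK γ z ^ (ℓ - r) := by
    intro ℓ
    rcases lt_or_ge ℓ r with h | h
    · simp [Nat.choose_eq_zero_of_lt h]
    · obtain ⟨t, rfl⟩ := Nat.exists_eq_add_of_le h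
      rw [show r + t - r = t by omega, kK,
        show (-(-(((γ 1 0 : ℝ)):ℂ) * jJ γ z)) = (((γ 1 0 : ℝ)):ℂ) * jJ γ z by ring]
      generalize jJ γ z = J at hj ⊢
      generalize (((γ 1 0 : ℝ)):ℂ) = c
      have e : J ^ (2 * r) * (J⁻¹ ^ 2) ^ (r + t) * J ^ t =
          (J * J⁻¹) ^ (2 * r) * (J * J⁻¹) ^ t * J⁻¹ ^ t := by ring
      rw [mul_inv_cancel₀ hj] at e
      linear_combination (F z).coeff (r + t) * c ^ t * ((r + t).choose r : ℂ) * e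
  have hn : (F z).natDegree ≤ m := Polynomial.natDegree_le_iff_degree_le.mpr (hF.1 z)
  refine Eq.trans (Finset.sum_congr rfl fun ℓ _ => hterm ℓ) ?_
  rw [Finset.sum_subset (Finset.range_subset_range.mpr (by omega : (F z).natDegree + 1 ≤ m + 1))
    (fun ℓ _ hℓ => by
      simp only [Finset.mem_range, not_lt] at hℓ
      simp [Polynomial.coeff_eq_zero_of_natDegree_lt (by omega : (F z).natDegree < ℓ)])]
  refine (Finset.sum_subset (fun ℓ hℓ => ?_) (fun ℓ hℓ1 hℓ2 => ?_)).symm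
  · simp only [Finset.mem_Icc] at hℓ
    exact Finset.mem_range.mpr (by omega)
  · simp only [Finset.mem_range] at hℓ1
    simp only [Finset.mem_Icc, not_and, not_le] at hℓ2
    have hlr : ℓ < r := by
      by_contra hcon
      exact absurd (hℓ2 (by omega)) (by omega)
    simp [Nat.choose_eq_zero_of_lt hlr]
end
end

section
/- Let Γ be a discrete subgroup of SL(2,ℝ), let λ ∈ ℤ and m, δ ≥ 0, and let F(z,X) = Σ_{r=0}^m f_r(z) X^r ∈ QP^m_{λ+2m+2δ}(Γ). Define φ_i = (m−i)! · f_{m−i} for 0 ≤ i ≤ m. Then for each k ∈ {0,1,…,m}, all z ∈ ℍ and all γ ∈ Γ, one has (φ_k |_{2k+2δ+λ} γ)(z) = Σ_{r=0}^k (1/r!) 𝔎(γ,z)^r φ_{k−r}(z). -/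
noncomputable section

open Complex Polynomial

lemma det_e (γ : SL2R) : (γ 0 0 : ℝ) * γ 1 1 - γ 0 1 * γ 1 0 = 1 := by
  have := γ.2
  rw [Matrix.det_fin_two] at this
  exact this

lemma jJ_ne (γ : SL2R) {z : ℂ} (hz : 0 < z.im) : jJ γ z ≠ 0 := by
  intro h
  unfold jJ at h
  have him := congrArg Complex.im h
  have hre := congrArg Complex.re h
  simp [Complex.add_im, Complex.add_re, Complex.mul_im, Complex.mul_re] at him hre
  have hc : (γ 1 0 : ℝ) = 0 := by
    rcases him with h1 | h1
    · exact h1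
    · exact absurd h1 (ne_of_gt hz)
  rw [hc] at hre
  simp at hre
  have := det_e γ
  rw [hc, hre] at this
  simp at this

lemma im_mact (γ : SL2R) {z : ℂ} (hz : 0 < z.im) : 0 < (mact γ z).im := by
  have hj := jJ_ne γ hz
  have hns : 0 < Complex.normSq (jJ γ z) := by
    rwa [Complex.normSq_pos]
  have hre : (jJ γ z).re = (γ 1 0 : ℝ) * z.re + γ 1 1 := by
    unfold jJ; simp [Complex.add_re, Complex.mul_re]
  have him : (jJ γ z).im = (γ 1 0 : ℝ) * z.im := by
    unfold jJ; simp [Complex.add_im, Complex.mul_im]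
  have hd := det_e γ
  unfold mact
  rw [Complex.div_im, div_sub_div_same, lt_div_iff₀ hns]
  rw [hre, him]
  simp [Complex.add_im, Complex.add_re, Complex.mul_im, Complex.mul_re]
  nlinarith [hz, hd]

lemma inv_entry (γ : SL2R) : ((γ⁻¹ : SL2R) 0 0 : ℝ) = γ 1 1 ∧ ((γ⁻¹ : SL2R) 0 1 : ℝ) = -γ 0 1 ∧ ((γ⁻¹ : SL2R) 1 0 : ℝ) = -γ 1 0 ∧ ((γ⁻¹ : SL2R) 1 1 : ℝ) = γ 0 0 := by
  rw [Matrix.SpecialLinearGroup.SL2_inv_expl]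
  refine ⟨rfl, rfl, rfl, rfl⟩

lemma jJ_inv (γ : SL2R) {z : ℂ} (hz : 0 < z.im) : jJ γ⁻¹ (mact γ z) = (jJ γ z)⁻¹ := by
  have hj := jJ_ne γ hz
  obtain ⟨h1, h2, h3, h4⟩ := inv_entry γ
  unfold jJ mact
  rw [h3, h4]
  have hd := det_e γ
  unfold jJ at hj ⊢
  field_simp
  push_cast
  have : ((γ 0 0 : ℝ) : ℂ) * (γ 1 1 : ℝ) - (γ 0 1 : ℝ) * (γ 1 0 : ℝ) = 1 := by
    rw [← Complex.ofReal_mul, ← Complex.ofReal_mul, ← Complex.ofReal_sub, hd]; simp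
  field_simp
  ring_nf
  ring_nf at this
  linear_combination this

lemma kK_inv (γ : SL2R) {z : ℂ} (hz : 0 < z.im) : kK γ⁻¹ (mact γ z) = -((jJ γ z)^2 * kK γ z) := by
  have hj := jJ_ne γ hz
  obtain ⟨h1, h2, h3, h4⟩ := inv_entry γ
  unfold kK
  rw [jJ_inv γ hz, h3]
  push_cast
  field_simp

lemma mact_inv (γ : SL2R) {z : ℂ} (hz : 0 < z.im) : mact γ⁻¹ (mact γ z) = z := by
  have hj := jJ_ne γ hz
  obtain ⟨h1, h2, h3, h4⟩ := inv_entry γ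
  have hji := jJ_inv γ hz
  unfold mact at hji ⊢
  rw [hji, h1, h2]
  have hd : ((γ 0 0 : ℝ) : ℂ) * (γ 1 1 : ℝ) - (γ 0 1 : ℝ) * (γ 1 0 : ℝ) = 1 := by
    have := det_e γ
    rw [← Complex.ofReal_mul, ← Complex.ofReal_mul, ← Complex.ofReal_sub, this]; simp
  unfold jJ at hj ⊢
  push_cast
  have hj' : z * ((γ 1 0 : ℝ) : ℂ) + ((γ 1 1 : ℝ) : ℂ) ≠ 0 := by rwa [mul_comm]
  field_simp
  linear_combination z * hd


lemma coeff_comp_linear_s7 (p : Polynomial ℂ) (u v : ℂ) (n N : ℕ) (h : p.natDegree < N) :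
    (p.comp (C u * (X + C v))).coeff n =
      ∑ e ∈ Finset.range N, p.coeff e * (u ^ e * (v ^ (e - n) * (e.choose n : ℂ))) := by
  rw [Polynomial.comp_eq_sum_left, Polynomial.sum_over_range' _ (fun n' => by simp) _ h,
    Polynomial.finset_sum_coeff]
  apply Finset.sum_congr rfl
  intro e _
  rw [mul_pow, ← C_pow, coeff_C_mul, coeff_C_mul, coeff_X_add_C_pow]

theorem stmt7_aux (l : ℤ) (m δ : ℕ)
    (F : ℂ → Polynomial ℂ) (hdeg : ∀ z : ℂ, (F z).degree ≤ (m : WithBot ℕ))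
    (k : ℕ) (hk : k ≤ m) (γ : SL2R) (z : ℂ) (hz : z ∈ UHP)
    (key : Polynomial.C (jJ γ⁻¹ (mact γ z) ^ (-(l + 2 * (m:ℤ) + 2 * (δ:ℤ)))) *
      (F (mact γ⁻¹ (mact γ z))).comp (Polynomial.C (jJ γ⁻¹ (mact γ z) ^ 2) *
        (Polynomial.X - Polynomial.C (kK γ⁻¹ (mact γ z)))) = F (mact γ z)) :
      jJ γ z ^ (-(2 * (k : ℤ) + 2 * (δ : ℤ) + l)) *
          (((m - k).factorial : ℂ) * (F (mact γ z)).coeff (m - k)) =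
        ∑ r ∈ Finset.range (k + 1),
          (1 / (r.factorial : ℂ)) * kK γ z ^ r *
            (((m - (k - r)).factorial : ℂ) * (F z).coeff (m - (k - r))) := by
  have hz' : 0 < z.im := hz
  have hj := jJ_ne γ hz'
  set J := jJ γ z with hJ
  set K := kK γ z with hK
  set n := m - k with hn
  rw [jJ_inv γ hz', kK_inv γ hz', mact_inv γ hz'] at key
  have hnd : (F z).natDegree < m + 1 :=
    Nat.lt_succ_of_le (Polynomial.natDegree_le_iff_degree_le.mpr (hdeg z))
  have hco := congrArg (fun p => Polynomial.coeff p n) key.symm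
  simp only [coeff_C_mul, map_neg, sub_neg_eq_add] at hco
  rw [coeff_comp_linear_s7 _ _ _ n (m+1) hnd] at hco
  rw [hco]
  have hinv : (J⁻¹) ^ (-(l + 2 * (m:ℤ) + 2 * (δ:ℤ))) = J ^ (l + 2 * (m:ℤ) + 2 * (δ:ℤ)) := by
    rw [inv_zpow, zpow_neg, inv_inv]
  rw [hinv]
  -- combine the two zpow factors
  have hpow : J ^ (-(2 * (k : ℤ) + 2 * (δ : ℤ) + l)) * J ^ (l + 2 * (m:ℤ) + 2 * (δ:ℤ))
      = (J ^ 2) ^ n := by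
    rw [← zpow_add₀ hj]
    have h1 : -(2 * (k : ℤ) + 2 * (δ : ℤ) + l) + (l + 2 * (m:ℤ) + 2 * (δ:ℤ))
        = ((2 * n : ℕ) : ℤ) := by push_cast [hn, Nat.cast_sub hk]; ring
    rw [h1, zpow_natCast, pow_mul]
  calc J ^ (-(2 * (k : ℤ) + 2 * (δ : ℤ) + l)) *
        (((n).factorial : ℂ) * (J ^ (l + 2 * (m:ℤ) + 2 * (δ:ℤ)) *
          ∑ e ∈ Finset.range (m+1), (F z).coeff e *
            (((J⁻¹) ^ 2) ^ e * ((J ^ 2 * K) ^ (e - n) * (e.choose n : ℂ))))) =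
      ∑ e ∈ Finset.range (m+1), (J ^ 2) ^ n * (((n).factorial : ℂ) * ((F z).coeff e *
            (((J⁻¹) ^ 2) ^ e * ((J ^ 2 * K) ^ (e - n) * (e.choose n : ℂ))))) := by
        rw [Finset.mul_sum, Finset.mul_sum, Finset.mul_sum]
        apply Finset.sum_congr rfl
        intro e _
        linear_combination (↑n.factorial * ((F z).coeff e *
          ((J⁻¹ ^ 2) ^ e * ((J ^ 2 * K) ^ (e - n) * (e.choose n : ℂ))))) * hpow
    _ = ∑ r ∈ Finset.range (k + 1),
          (1 / (r.factorial : ℂ)) * K ^ r *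
            (((m - (k - r)).factorial : ℂ) * (F z).coeff (m - (k - r))) := by
        have hsub : Finset.Ico n (m+1) ⊆ Finset.range (m+1) := by
          intro x hx; simp only [Finset.mem_Ico] at hx; simp only [Finset.mem_range]; omega
        have hvan : ∀ e ∈ Finset.range (m+1), e ∉ Finset.Ico n (m+1) →
            (J ^ 2) ^ n * (((n).factorial : ℂ) * ((F z).coeff e *
              (((J⁻¹) ^ 2) ^ e * ((J ^ 2 * K) ^ (e - n) * (e.choose n : ℂ))))) = 0 := by
          intro e he hne
          have hlt : e < n := by
            simp only [Finset.mem_range] at he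
            simp only [Finset.mem_Ico, not_and, not_lt] at hne
            omega
          simp [Nat.choose_eq_zero_of_lt hlt]
        rw [← Finset.sum_subset hsub hvan, Finset.sum_Ico_eq_sum_range]
        have hkk : m + 1 - n = k + 1 := by omega
        rw [hkk]
        apply Finset.sum_congr rfl
        intro r hr
        have hrk : r ≤ k := by simp only [Finset.mem_range] at hr; omega
        have h1 : m - (k - r) = n + r := by omega
        have h2 : n + r - n = r := by omega
        rw [h1, h2]
        have hJ2 : (J : ℂ) ^ 2 ≠ 0 := pow_ne_zero _ hj
        have hiv : ((J⁻¹) ^ 2) ^ (n + r) = ((J ^ 2) ^ n * (J ^ 2) ^ r)⁻¹ := by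
          rw [inv_pow, inv_pow, ← pow_add]
        rw [hiv, mul_pow (J ^ 2) K r]
        have hnat : (n + r).choose n * r.factorial * n.factorial = (n + r).factorial := by
          rw [Nat.add_comm n r]
          exact Nat.add_choose_mul_factorial_mul_factorial r n
        have hc : (((n + r).choose n : ℂ)) * (r.factorial : ℂ) * (n.factorial : ℂ)
            = ((n + r).factorial : ℂ) := by exact_mod_cast congrArg Nat.cast hnat
        have hrf : (r.factorial : ℂ) ≠ 0 := Nat.cast_ne_zero.mpr r.factorial_ne_zero
        field_simp
        linear_combination ((F z).coeff (n + r) * K ^ r) * hc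

-- STATEMENT 7
theorem stmt7 (Γ : Subgroup SL2R) (hΓ : DiscreteTopology Γ) (l : ℤ) (m δ : ℕ)
    (F : ℂ → Polynomial ℂ) (hF : IsQP Γ (l + 2 * (m : ℤ) + 2 * (δ : ℤ)) m F) :
    ∀ k ≤ m, ∀ γ ∈ Γ, ∀ z ∈ UHP,
      jJ γ z ^ (-(2 * (k : ℤ) + 2 * (δ : ℤ) + l)) *
          (((m - k).factorial : ℂ) * (F (mact γ z)).coeff (m - k)) =
        ∑ r ∈ Finset.range (k + 1),
          (1 / (r.factorial : ℂ)) * kK γ z ^ r *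
            (((m - (k - r)).factorial : ℂ) * (F z).coeff (m - (k - r))) := by
  intro k hk γ hγ z hz
  have hz' : 0 < z.im := hz
  have key := hF.2 γ⁻¹ (Γ.inv_mem hγ) (mact γ z) (im_mact γ hz')
  exact stmt7_aux l m δ F hF.1.1 k hk γ z hz key
end
end

section
/- Let Γ be a discrete subgroup of SL(2,ℝ), let δ > 0 and λ ∈ ℤ with λ + 2δ ≥ 1, let m ≥ 0, and let h ∈ M_{λ+2δ}(Γ) be a modular form. Then the polynomial (Ξ^{λ+2δ}_m h)(z,X) = Σ_{r=0}^m [m! (λ+2δ−1)! / (r! (m−r)! (m−r+2δ+λ−1)!)] h^{(m−r)}(z) X^r is a quasimodular polynomial belonging to QP^m_{λ+2m+2δ}(Γ), and its leading coefficient satisfies 𝔖_m(Ξ^{λ+2δ}_m h) = h. -/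
noncomputable section

open Complex Polynomial

-- STATEMENT 13 def
/-- The lifting `Ξ^{λ+2δ}_m h` of a modular form to a quasimodular polynomial. -/
def XiLift (l : ℤ) (δ m : ℕ) (h : ℂ → ℂ) : ℂ → Polynomial ℂ := fun z =>
  ∑ r ∈ Finset.range (m + 1),
    Polynomial.C ((m.factorial : ℂ) * zfact (l + 2 * (δ : ℤ) - 1) * deriv^[m - r] h z /
        ((r.factorial : ℂ) * ((m - r).factorial : ℂ) *
          zfact ((m : ℤ) - (r : ℤ) + 2 * (δ : ℤ) + l - 1))) *
      Polynomial.X ^ r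

namespace Stmt13Aux

open Finset

lemma UHP_open : IsOpen UHP := isOpen_lt continuous_const Complex.continuous_im

lemma det_c {γ : SL2R} :
    ((γ 0 0 : ℝ) : ℂ) * ((γ 1 1 : ℝ) : ℂ) - ((γ 0 1 : ℝ) : ℂ) * ((γ 1 0 : ℝ) : ℂ) = 1 := by
  have h : Matrix.det (γ : Matrix (Fin 2) (Fin 2) ℝ) = 1 := γ.2
  rw [Matrix.det_fin_two] at h
  exact_mod_cast congrArg (fun x : ℝ => (x : ℂ)) h

lemma jJ_ne {γ : SL2R} {z : ℂ} (hz : z ∈ UHP) : jJ γ z ≠ 0 := by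
  intro h0
  have him := congrArg Complex.im h0
  have hre := congrArg Complex.re h0
  simp [jJ, Complex.add_im, Complex.mul_im, Complex.add_re, Complex.mul_re] at him hre
  have hzim : 0 < z.im := hz
  have hc : (γ 1 0 : ℝ) = 0 := by
    rcases him with h | h
    · exact h
    · exact absurd h (ne_of_gt hzim)
  have hd : (γ 1 1 : ℝ) = 0 := by
    rw [hc] at hre; simpa using hre
  have := det_c (γ := γ)
  rw [hc, hd] at this
  simp at this

lemma mact_mem {γ : SL2R} {z : ℂ} (hz : z ∈ UHP) : mact γ z ∈ UHP := by
  have hJ : jJ γ z ≠ 0 := jJ_ne hz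
  have hns : 0 < Complex.normSq (jJ γ z) := Complex.normSq_pos.mpr hJ
  have hdet : (γ 0 0 : ℝ) * (γ 1 1 : ℝ) - (γ 0 1 : ℝ) * (γ 1 0 : ℝ) = 1 := by
    have h : Matrix.det (γ : Matrix (Fin 2) (Fin 2) ℝ) = 1 := γ.2
    rw [Matrix.det_fin_two] at h; exact h
  have hzim : 0 < z.im := hz
  show 0 < (mact γ z).im
  rw [mact, Complex.div_im]
  have h1 : (((γ 0 0 : ℝ) : ℂ) * z + ((γ 0 1 : ℝ) : ℂ)).im = (γ 0 0 : ℝ) * z.im := by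
    simp [Complex.add_im, Complex.mul_im]
  have h2 : (((γ 0 0 : ℝ) : ℂ) * z + ((γ 0 1 : ℝ) : ℂ)).re = (γ 0 0 : ℝ) * z.re + (γ 0 1 : ℝ) := by
    simp [Complex.add_re, Complex.mul_re]
  have h3 : (jJ γ z).re = (γ 1 0 : ℝ) * z.re + (γ 1 1 : ℝ) := by
    simp [jJ, Complex.add_re, Complex.mul_re]
  have h4 : (jJ γ z).im = (γ 1 0 : ℝ) * z.im := by
    simp [jJ, Complex.add_im, Complex.mul_im]
  rw [h1, h2, h3, h4]
  have : (γ 0 0 : ℝ) * z.im * ((γ 1 0 : ℝ) * z.re + (γ 1 1 : ℝ)) / Complex.normSq (jJ γ z) -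
      ((γ 0 0 : ℝ) * z.re + (γ 0 1 : ℝ)) * ((γ 1 0 : ℝ) * z.im) / Complex.normSq (jJ γ z)
      = z.im / Complex.normSq (jJ γ z) := by
    rw [div_sub_div_same]
    congr 1
    nlinarith [hdet]
  rw [this]
  positivity

end Stmt13Aux
namespace Stmt13Aux

open Finset

lemma hasDerivAt_jJ (γ : SL2R) (z : ℂ) : HasDerivAt (jJ γ) (((γ 1 0 : ℝ) : ℂ)) z := by
  have : HasDerivAt (fun z : ℂ => ((γ 1 0 : ℝ) : ℂ) * z + ((γ 1 1 : ℝ) : ℂ))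
      (((γ 1 0 : ℝ) : ℂ) * 1) z := ((hasDerivAt_id z).const_mul _).add_const _
  rw [mul_one] at this; exact this

lemma hasDerivAt_kK {γ : SL2R} {z : ℂ} (hz : z ∈ UHP) :
    HasDerivAt (kK γ) (-(kK γ z) ^ 2) z := by
  have hJ : jJ γ z ≠ 0 := jJ_ne hz
  have := (hasDerivAt_const z (((γ 1 0 : ℝ) : ℂ))).div (hasDerivAt_jJ γ z) hJ
  have heq : (0 * jJ γ z - ((γ 1 0 : ℝ) : ℂ) * ((γ 1 0 : ℝ) : ℂ)) / jJ γ z ^ 2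
      = -(kK γ z) ^ 2 := by
    rw [kK]; field_simp; ring
  rw [heq] at this
  exact this

lemma hasDerivAt_mact {γ : SL2R} {z : ℂ} (hz : z ∈ UHP) :
    HasDerivAt (mact γ) (jJ γ z ^ (-2 : ℤ)) z := by
  have hJ : jJ γ z ≠ 0 := jJ_ne hz
  have hnum : HasDerivAt (fun z : ℂ => ((γ 0 0 : ℝ) : ℂ) * z + ((γ 0 1 : ℝ) : ℂ))
      (((γ 0 0 : ℝ) : ℂ)) z := by
    have := ((hasDerivAt_id z).const_mul (((γ 0 0 : ℝ) : ℂ))).add_const (((γ 0 1 : ℝ) : ℂ))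
    simpa using this
  have := hnum.div (hasDerivAt_jJ γ z) hJ
  have heq : (((γ 0 0 : ℝ) : ℂ) * jJ γ z -
      (((γ 0 0 : ℝ) : ℂ) * z + ((γ 0 1 : ℝ) : ℂ)) * ((γ 1 0 : ℝ) : ℂ)) / jJ γ z ^ 2
      = jJ γ z ^ (-2 : ℤ) := by
    have h1 : ((γ 0 0 : ℝ) : ℂ) * jJ γ z -
        (((γ 0 0 : ℝ) : ℂ) * z + ((γ 0 1 : ℝ) : ℂ)) * ((γ 1 0 : ℝ) : ℂ) = 1 := by
      rw [jJ]; linear_combination det_c (γ := γ)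
    rw [h1, zpow_neg, one_div]
    norm_cast
  rw [heq] at this
  exact this

lemma iter_analytic {h : ℂ → ℂ} (hh : Hol h) : ∀ n, AnalyticOnNhd ℂ (deriv^[n] h) UHP := by
  intro n
  induction n with
  | zero => exact hh.analyticOnNhd UHP_open
  | succ n ih => rw [Function.iterate_succ_apply']; exact ih.deriv

end Stmt13Aux
namespace Stmt13Aux

open Finset

/-- `Bc L p t = (p+t)! (p+t+L)! / (p! t! (t+L)!)`. -/
def Bc (L p t : ℕ) : ℂ :=
  (((p + t).factorial : ℂ) * ((p + t + L).factorial : ℂ)) /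
    ((p.factorial : ℂ) * (t.factorial : ℂ) * ((t + L).factorial : ℂ))

/-- `Cc L r t = (r+t)! L! / (r! t! (t+L)!)`. -/
def Cc (L r t : ℕ) : ℂ :=
  (((r + t).factorial : ℂ) * (L.factorial : ℂ)) /
    ((r.factorial : ℂ) * (t.factorial : ℂ) * ((t + L).factorial : ℂ))

lemma fact_ne (n : ℕ) : ((n.factorial : ℂ)) ≠ 0 :=
  Nat.cast_ne_zero.mpr n.factorial_ne_zero

lemma fs (a b : ℕ) (hab : a = b + 1) : ((a.factorial : ℂ)) = ((b : ℂ) + 1) * (b.factorial : ℂ) := by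
  subst hab; rw [Nat.factorial_succ]; push_cast; ring

lemma Bc_zero (L t : ℕ) : Bc L 0 t = 1 := by
  rw [Bc]
  simp only [Nat.zero_add, Nat.factorial_zero, Nat.cast_one, one_mul]
  exact div_self (mul_ne_zero (fact_ne _) (fact_ne _))

lemma Bc_step_top (L n : ℕ) : Bc L (n + 1) 0 = ((n : ℂ) + L + 1) * Bc L n 0 := by
  rw [Bc, Bc]
  rw [show n + 1 + 0 + L = n + L + 1 by omega, show n + 1 + 0 = n + 1 by omega,
    show n + 0 + L = n + L by omega, show n + 0 = n by omega, show (0 : ℕ) + L = L by omega]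
  rw [mul_div_assoc']
  rw [div_eq_div_iff
    (mul_ne_zero (mul_ne_zero (fact_ne (n+1)) (fact_ne 0)) (fact_ne L))
    (mul_ne_zero (mul_ne_zero (fact_ne n) (fact_ne 0)) (fact_ne L))]
  rw [fs (n + 1) n rfl, fs (n + L + 1) (n + L) rfl]
  push_cast
  ring

lemma Bc_step (L q v : ℕ) :
    Bc L (q + 1) (v + 1) = ((q : ℂ) + 2 * v + L + 3) * Bc L q (v + 1) + Bc L (q + 1) v := by
  rw [Bc, Bc, Bc]
  rw [show q + 1 + (v + 1) + L = q + v + L + 2 by omega, show q + 1 + (v + 1) = q + v + 2 by omega,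
    show q + (v + 1) + L = q + v + L + 1 by omega, show q + (v + 1) = q + v + 1 by omega,
    show q + 1 + v + L = q + v + L + 1 by omega, show q + 1 + v = q + v + 1 by omega,
    show v + 1 + L = v + L + 1 by omega]
  rw [mul_div_assoc']
  rw [div_add_div _ _ (mul_ne_zero (mul_ne_zero (fact_ne q) (fact_ne (v+1))) (fact_ne (v+L+1)))
      (mul_ne_zero (mul_ne_zero (fact_ne (q+1)) (fact_ne v)) (fact_ne (v+L)))]
  rw [div_eq_div_iff (mul_ne_zero (mul_ne_zero (fact_ne (q+1)) (fact_ne (v+1))) (fact_ne (v+L+1)))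
      (mul_ne_zero (mul_ne_zero (mul_ne_zero (fact_ne q) (fact_ne (v+1))) (fact_ne (v+L+1)))
        (mul_ne_zero (mul_ne_zero (fact_ne (q+1)) (fact_ne v)) (fact_ne (v+L))))]
  rw [fs (q + v + 2) (q + v + 1) rfl, fs (q + v + 1) (q + v) rfl,
    fs (q + v + L + 2) (q + v + L + 1) rfl, fs (q + v + L + 1) (q + v + L) rfl,
    fs (v + L + 1) (v + L) rfl, fs (q + 1) q rfl, fs (v + 1) v rfl]
  push_cast
  ring

lemma Cc_mul_Bc (L r p t : ℕ) :
    Cc L r (p + t) * Bc L p t = Cc L (r + p) t * (((r + p).choose r : ℕ) : ℂ) := by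
  have hch : (((r + p).choose r : ℕ) : ℂ) = ((r + p).factorial : ℂ) /
      ((r.factorial : ℂ) * (p.factorial : ℂ)) := by
    rw [eq_div_iff (mul_ne_zero (fact_ne r) (fact_ne p)), ← mul_assoc]
    have := Nat.choose_mul_factorial_mul_factorial (Nat.le_add_right r p)
    rw [Nat.add_sub_cancel_left] at this
    exact_mod_cast this
  rw [hch, Cc, Cc, Bc]
  rw [show r + (p + t) = r + p + t by omega]
  rw [div_mul_div_comm, div_mul_div_comm]
  have hA : ((r.factorial : ℂ) * ((p+t).factorial : ℂ) * ((p+t+L).factorial : ℂ)) *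
      ((p.factorial : ℂ) * (t.factorial : ℂ) * ((t+L).factorial : ℂ)) ≠ 0 :=
    mul_ne_zero (mul_ne_zero (mul_ne_zero (fact_ne r) (fact_ne (p+t))) (fact_ne (p+t+L)))
      (mul_ne_zero (mul_ne_zero (fact_ne p) (fact_ne t)) (fact_ne (t+L)))
  have hB : (((r+p).factorial : ℂ) * (t.factorial : ℂ) * ((t+L).factorial : ℂ)) *
      ((r.factorial : ℂ) * (p.factorial : ℂ)) ≠ 0 :=
    mul_ne_zero (mul_ne_zero (mul_ne_zero (fact_ne (r+p)) (fact_ne t)) (fact_ne (t+L)))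
      (mul_ne_zero (fact_ne r) (fact_ne p))
  rw [div_eq_div_iff hA hB]
  ring

end Stmt13Aux
namespace Stmt13Aux

open Finset

lemma sum_rec (L n : ℕ) (K : ℂ) (w : ℕ → ℂ) :
    ∑ q ∈ range (n + 2), Bc L q (n + 1 - q) * K ^ q * w (n + 1 - q)
      = ∑ p ∈ range (n + 1), Bc L p (n - p) *
          ((2 * (n : ℂ) + L + 1 - p) * K ^ (p + 1) * w (n - p) + K ^ p * w (n + 1 - p)) := by
  have hsplit : ∑ p ∈ range (n + 1), Bc L p (n - p) *
        ((2 * (n : ℂ) + L + 1 - p) * K ^ (p + 1) * w (n - p) + K ^ p * w (n + 1 - p))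
      = (∑ p ∈ range (n + 1), Bc L p (n - p) * ((2 * (n : ℂ) + L + 1 - p) * K ^ (p + 1) * w (n - p)))
        + ∑ p ∈ range (n + 1), Bc L p (n - p) * (K ^ p * w (n + 1 - p)) := by
    rw [← Finset.sum_add_distrib]
    exact Finset.sum_congr rfl (fun p _ => by ring)
  rw [hsplit]
  rw [Finset.sum_range_succ' (fun q => Bc L q (n + 1 - q) * K ^ q * w (n + 1 - q)) (n + 1)]
  rw [Finset.sum_range_succ' (fun p => Bc L p (n - p) * (K ^ p * w (n + 1 - p))) n]
  simp only [Nat.succ_sub_succ, Nat.sub_zero, pow_zero, Bc_zero, one_mul, mul_one]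
  rw [Finset.sum_range_succ (fun q => Bc L (q + 1) (n - q) * K ^ (q + 1) * w (n - q)) n]
  rw [Finset.sum_range_succ
    (fun p => Bc L p (n - p) * ((2 * (n : ℂ) + L + 1 - p) * K ^ (p + 1) * w (n - p))) n]
  simp only [Nat.sub_self]
  have htop : Bc L (n + 1) 0 * K ^ (n + 1) * w 0
      = Bc L n 0 * ((2 * (n : ℂ) + L + 1 - n) * K ^ (n + 1) * w 0) := by
    rw [Bc_step_top]
    ring_nf
  have hmain : ∀ q ∈ range n, Bc L (q + 1) (n - q) * K ^ (q + 1) * w (n - q)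
      = Bc L q (n - q) * ((2 * (n : ℂ) + L + 1 - q) * K ^ (q + 1) * w (n - q))
        + Bc L (q + 1) (n - (q + 1)) * (K ^ (q + 1) * w (n - q)) := by
    intro q hq
    have hqn : q < n := Finset.mem_range.mp hq
    obtain ⟨v, hv⟩ : ∃ v, n - q = v + 1 := ⟨n - q - 1, by omega⟩
    have hv2 : n - (q + 1) = v := by omega
    have hco : 2 * (n : ℂ) + L + 1 - q = (q : ℂ) + 2 * v + L + 3 := by
      have hn : n = q + v + 1 := by omega
      rw [hn]; push_cast; ring
    rw [hv, hv2, hco, Bc_step]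
    ring
  rw [Finset.sum_congr rfl hmain, Finset.sum_add_distrib, htop]
  ring

lemma triangle_sum {M : Type*} [AddCommMonoid M] (g : ℕ → ℕ → M) (m : ℕ) :
    ∑ s ∈ range (m + 1), ∑ r ∈ range (s + 1), g r (s - r)
      = ∑ r ∈ range (m + 1), ∑ p ∈ range (m - r + 1), g r p := by
  induction m with
  | zero => simp
  | succ m ih =>
    rw [Finset.sum_range_succ
      (fun s => ∑ r ∈ range (s + 1), g r (s - r)) (m + 1), ih]
    rw [Finset.sum_range_succ (fun r => ∑ p ∈ range (m + 1 - r + 1), g r p) (m + 1)]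
    rw [Finset.sum_range_succ (fun r => g r (m + 1 - r)) (m + 1)]
    simp only [Nat.sub_self]
    have hinner : ∀ r ∈ range (m + 1),
        ∑ p ∈ range (m + 1 - r + 1), g r p
          = (∑ p ∈ range (m - r + 1), g r p) + g r (m + 1 - r) := by
      intro r hr
      have hrm : r < m + 1 := Finset.mem_range.mp hr
      rw [show m + 1 - r + 1 = (m - r + 1) + 1 by omega, Finset.sum_range_succ,
        show m - r + 1 = m + 1 - r by omega]
    rw [Finset.sum_congr rfl hinner, Finset.sum_add_distrib]
    simp [Finset.sum_range_one, add_assoc]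

end Stmt13Aux
namespace Stmt13Aux

open Finset Polynomial

lemma star (L m : ℕ) (K : ℂ) (w : ℕ → ℂ) :
    ∑ r ∈ range (m + 1),
        Polynomial.C (Cc L r (m - r) *
          ∑ p ∈ range (m - r + 1), Bc L p (m - r - p) * K ^ p * w (m - r - p)) *
        (Polynomial.X - Polynomial.C K) ^ r
      = ∑ s ∈ range (m + 1), Polynomial.C (Cc L s (m - s) * w (m - s)) * Polynomial.X ^ s := by
  have hLHS : ∀ r ∈ range (m + 1),
      Polynomial.C (Cc L r (m - r) *
          ∑ p ∈ range (m - r + 1), Bc L p (m - r - p) * K ^ p * w (m - r - p)) *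
        (Polynomial.X - Polynomial.C K) ^ r
      = ∑ p ∈ range (m - r + 1),
          Polynomial.C (Cc L (r + p) (m - r - p) * w (m - r - p) * K ^ p *
            (((r + p).choose r : ℕ) : ℂ)) * (Polynomial.X - Polynomial.C K) ^ r := by
    intro r hr
    rw [Finset.mul_sum, map_sum, Finset.sum_mul]
    refine Finset.sum_congr rfl (fun p hp => ?_)
    have hpr : p ≤ m - r := by have := Finset.mem_range.mp hp; omega
    have hkey := Cc_mul_Bc L r p (m - r - p)
    rw [show p + (m - r - p) = m - r by omega] at hkey
    congr 1
    exact congrArg Polynomial.C (by linear_combination (K ^ p * w (m - r - p)) * hkey)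
  rw [Finset.sum_congr rfl hLHS, ← triangle_sum (fun r p =>
    Polynomial.C (Cc L (r + p) (m - r - p) * w (m - r - p) * K ^ p *
      (((r + p).choose r : ℕ) : ℂ)) * (Polynomial.X - Polynomial.C K) ^ r) m]
  refine Finset.sum_congr rfl (fun s hs => ?_)
  have hXs : (Polynomial.X : Polynomial ℂ) ^ s
      = ∑ r ∈ range (s + 1), (Polynomial.X - Polynomial.C K) ^ r * Polynomial.C K ^ (s - r) *
          ((s.choose r : ℕ) : Polynomial ℂ) := by
    conv_lhs => rw [show (Polynomial.X : Polynomial ℂ)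
      = (Polynomial.X - Polynomial.C K) + Polynomial.C K by ring]
    rw [add_pow]
  rw [hXs, Finset.mul_sum]
  refine Finset.sum_congr rfl (fun r hr => ?_)
  have hrs : r ≤ s := by have := Finset.mem_range.mp hr; omega
  rw [show r + (s - r) = s by omega, show m - r - (s - r) = m - s by omega,
    ← Polynomial.C_pow, ← Polynomial.C_eq_natCast]
  simp only [Polynomial.C_mul]
  ring

end Stmt13Aux
namespace Stmt13Aux

open Finset

lemma Kpow_deriv_aux (p : ℕ) (K : ℂ) :
    (p : ℂ) * K ^ (p - 1) * (-K ^ 2) = -((p : ℂ) * K ^ (p + 1)) := by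
  cases p with
  | zero => simp
  | succ p =>
    simp only [Nat.add_sub_cancel]
    push_cast
    ring

lemma lemA (h : ℂ → ℂ) (hhol : Hol h) (μ : ℤ) (hμ : 1 ≤ μ) (γ : SL2R)
    (htrans : ∀ z ∈ UHP, jJ γ z ^ (-μ) * h (mact γ z) = h z) :
    ∀ n : ℕ, ∀ z ∈ UHP, deriv^[n] h (mact γ z)
      = (∑ p ∈ range (n + 1),
          Bc (μ - 1).toNat p (n - p) * kK γ z ^ p * deriv^[n - p] h z)
        * jJ γ z ^ (2 * (n : ℤ) + μ) := by
  set L := (μ - 1).toNat with hLdef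
  have hμL : μ = (L : ℤ) + 1 := by omega
  intro n
  induction n with
  | zero =>
    intro z hz
    have hJ := jJ_ne (γ := γ) hz
    have hJμ : jJ γ z ^ μ ≠ 0 := zpow_ne_zero _ hJ
    have ht := htrans z hz
    rw [Finset.sum_range_one]
    simp only [Function.iterate_zero, id_eq, Nat.sub_zero, pow_zero, Nat.cast_zero, mul_zero,
      zero_add, one_mul, mul_one, Bc_zero]
    rw [← ht, zpow_neg]
    field_simp
  | succ n ih =>
    intro z hz
    have hJ := jJ_ne (γ := γ) hz
    have hzw := mact_mem (γ := γ) hz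
    have hw : ∀ t : ℕ, ∀ x ∈ UHP, HasDerivAt (deriv^[t] h) (deriv^[t + 1] h x) x := by
      intro t x hx
      have hA := ((iter_analytic hhol t) x hx).differentiableAt.hasDerivAt
      rw [Function.iterate_succ_apply' deriv t h]
      exact hA
    set c : ℂ := ((γ 1 0 : ℝ) : ℂ) with hc
    set e : ℤ := 2 * (n : ℤ) + μ with he
    have hterm : ∀ p ∈ range (n + 1),
        HasDerivAt (fun x => Bc L p (n - p) * kK γ x ^ p * deriv^[n - p] h x)
          (Bc L p (n - p) * ((p : ℂ) * kK γ z ^ (p - 1) * (-kK γ z ^ 2)) * deriv^[n - p] h z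
            + Bc L p (n - p) * kK γ z ^ p * deriv^[n - p + 1] h z) z := by
      intro p hp
      exact (((hasDerivAt_kK hz).pow p).const_mul _).mul (hw (n - p) z hz)
    have hsum : HasDerivAt
        (fun x => ∑ p ∈ range (n + 1), Bc L p (n - p) * kK γ x ^ p * deriv^[n - p] h x)
        (∑ p ∈ range (n + 1),
          (Bc L p (n - p) * ((p : ℂ) * kK γ z ^ (p - 1) * (-kK γ z ^ 2)) * deriv^[n - p] h z
            + Bc L p (n - p) * kK γ z ^ p * deriv^[n - p + 1] h z)) z :=
      HasDerivAt.fun_sum hterm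
    have hJp : HasDerivAt (fun x => jJ γ x ^ e) ((e : ℂ) * jJ γ z ^ (e - 1) * c) z := by
      have h0 := (hasDerivAt_zpow e (jJ γ z) (Or.inl hJ)).comp z (hasDerivAt_jJ γ z)
      exact h0
    have hRn := hsum.mul hJp
    have hLf : HasDerivAt (fun x => deriv^[n] h (mact γ x))
        (deriv^[n + 1] h (mact γ z) * jJ γ z ^ (-2 : ℤ)) z := by
      have h0 := (hw n (mact γ z) hzw).comp z (hasDerivAt_mact hz)
      exact h0
    have heq : (fun x => deriv^[n] h (mact γ x)) =ᶠ[nhds z]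
        (fun x => (∑ p ∈ range (n + 1), Bc L p (n - p) * kK γ x ^ p * deriv^[n - p] h x)
          * jJ γ x ^ e) := by
      filter_upwards [UHP_open.mem_nhds hz] with x hx
      exact ih x hx
    have huniq := hLf.unique (hRn.congr_of_eventuallyEq heq)
    have h2 : jJ γ z ^ (-2 : ℤ) * jJ γ z ^ (2 : ℤ) = 1 := by
      rw [← zpow_add₀ hJ]; norm_num
    have hmain : deriv^[n + 1] h (mact γ z)
        = ((∑ p ∈ range (n + 1),
            (Bc L p (n - p) * ((p : ℂ) * kK γ z ^ (p - 1) * (-kK γ z ^ 2)) * deriv^[n - p] h z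
              + Bc L p (n - p) * kK γ z ^ p * deriv^[n - p + 1] h z))
            * jJ γ z ^ e
          + (∑ p ∈ range (n + 1), Bc L p (n - p) * kK γ z ^ p * deriv^[n - p] h z)
            * ((e : ℂ) * jJ γ z ^ (e - 1) * c)) * jJ γ z ^ (2 : ℤ) := by
      calc deriv^[n + 1] h (mact γ z)
          = deriv^[n + 1] h (mact γ z) * (jJ γ z ^ (-2 : ℤ) * jJ γ z ^ (2 : ℤ)) := by
            rw [h2, mul_one]
        _ = deriv^[n + 1] h (mact γ z) * jJ γ z ^ (-2 : ℤ) * jJ γ z ^ (2 : ℤ) := by ring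
        _ = _ := by rw [huniq]
    rw [hmain]
    rw [show n + 1 + 1 = n + 2 by omega]
    rw [sum_rec L n (kK γ z) (fun t => deriv^[t] h z)]
    rw [show ((n + 1 : ℕ) : ℤ) = (n : ℤ) + 1 by push_cast; ring]
    have hE : jJ γ z ^ (2 * ((n : ℤ) + 1) + μ) = jJ γ z ^ e * jJ γ z ^ (2 : ℤ) := by
      rw [← zpow_add₀ hJ]
      congr 1
      rw [he]; ring
    rw [hE]
    have hcK : c = kK γ z * jJ γ z := by rw [kK]; field_simp; exact hc
    have hfact : (e : ℂ) * jJ γ z ^ (e - 1) * c * jJ γ z ^ (2 : ℤ)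
        = (2 * (n : ℂ) + L + 1) * kK γ z * (jJ γ z ^ e * jJ γ z ^ (2 : ℤ)) := by
      have hJe1 : jJ γ z ^ (e - 1) * jJ γ z = jJ γ z ^ e := by
        have := zpow_add₀ hJ (e - 1) 1
        rw [zpow_one] at this
        rw [← this]
        congr 1
        ring
      have hecast : ((e : ℤ) : ℂ) = 2 * (n : ℂ) + L + 1 := by
        rw [he, hμL]; push_cast; ring
      rw [hcK, hecast, ← hJe1]
      ring
    conv_lhs => rw [add_mul, Finset.sum_mul, Finset.sum_mul, Finset.sum_mul, Finset.sum_mul]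
    rw [← Finset.sum_add_distrib (s := Finset.range (n+1))
      (f := fun i => (Bc L i (n - i) * ((i : ℂ) * kK γ z ^ (i - 1) * -kK γ z ^ 2) * deriv^[n - i] h z
        + Bc L i (n - i) * kK γ z ^ i * deriv^[n - i + 1] h z) * jJ γ z ^ e * jJ γ z ^ (2 : ℤ))
      (g := fun i => Bc L i (n - i) * kK γ z ^ i * deriv^[n - i] h z
        * ((e : ℂ) * jJ γ z ^ (e - 1) * c) * jJ γ z ^ (2 : ℤ))]
    conv_rhs => rw [Finset.sum_mul]
    refine Finset.sum_congr rfl (fun p hp => ?_)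
    have hpn : p ≤ n := by have := Finset.mem_range.mp hp; omega
    rw [Kpow_deriv_aux p (kK γ z), show n - p + 1 = n + 1 - p by omega]
    linear_combination (Bc L p (n - p) * kK γ z ^ p * deriv^[n - p] h z) * hfact

end Stmt13Aux
namespace Stmt13Aux

open Finset Polynomial

lemma xilift_eq (l : ℤ) (δ : ℕ) (hl : 1 ≤ l + 2 * (δ : ℤ)) (m : ℕ) (h : ℂ → ℂ) (z : ℂ) :
    XiLift l δ m h z = ∑ r ∈ Finset.range (m + 1),
      Polynomial.C (Cc (l + 2 * (δ : ℤ) - 1).toNat r (m - r) * deriv^[m - r] h z) *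
        Polynomial.X ^ r := by
  rw [XiLift]
  refine Finset.sum_congr rfl (fun r hr => ?_)
  have hrm : r ≤ m := by have := Finset.mem_range.mp hr; omega
  congr 1
  apply congrArg Polynomial.C
  simp only [zfact, Cc]
  rw [show ((m : ℤ) - (r : ℤ) + 2 * (δ : ℤ) + l - 1).toNat
      = (m - r) + (l + 2 * (δ : ℤ) - 1).toNat by omega,
    show r + (m - r) = m by omega]
  ring

lemma xilift_coeff (l : ℤ) (δ m : ℕ) (h : ℂ → ℂ) (z : ℂ) (k : ℕ) :
    (XiLift l δ m h z).coeff k = if k ≤ m then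
      (m.factorial : ℂ) * zfact (l + 2 * (δ : ℤ) - 1) * deriv^[m - k] h z /
        ((k.factorial : ℂ) * ((m - k).factorial : ℂ) *
          zfact ((m : ℤ) - (k : ℤ) + 2 * (δ : ℤ) + l - 1)) else 0 := by
  rw [XiLift, Polynomial.finset_sum_coeff]
  simp only [Polynomial.coeff_C_mul, Polynomial.coeff_X_pow, mul_ite, mul_one, mul_zero]
  rw [Finset.sum_ite_eq (Finset.range (m + 1)) k]
  simp [Nat.lt_succ_iff]

end Stmt13Aux
-- STATEMENT 13
theorem stmt13 (Γ : Subgroup SL2R) (hΓ : DiscreteTopology Γ)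
    (δ : ℕ) (hδ : 0 < δ) (l : ℤ) (hl : 1 ≤ l + 2 * (δ : ℤ)) (m : ℕ)
    (h : ℂ → ℂ) (hh : IsModular Γ (l + 2 * (δ : ℤ)) h) :
    IsQP Γ (l + 2 * (m : ℤ) + 2 * (δ : ℤ)) m (XiLift l δ m h) ∧
      ∀ z : ℂ, (XiLift l δ m h z).coeff m = h z := by
  obtain ⟨hhol, htrans⟩ := hh
  have hzf : zfact (l + 2 * (δ : ℤ) - 1) ≠ 0 := by
    simp only [zfact]; exact Stmt13Aux.fact_ne _
  have hdiff : ∀ k : ℕ, DifferentiableOn ℂ (deriv^[k] h) UHP := fun k =>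
    fun x hx => ((Stmt13Aux.iter_analytic hhol k) x hx).differentiableAt.differentiableWithinAt
  refine ⟨⟨⟨?_, ?_⟩, ?_⟩, ?_⟩
  · -- degree bound
    intro z
    rw [XiLift]
    refine (Polynomial.degree_sum_le _ _).trans ?_
    refine Finset.sup_le (fun r hr => ?_)
    have hrm : r ≤ m := by have := Finset.mem_range.mp hr; omega
    refine (Polynomial.degree_C_mul_X_pow_le _ _).trans ?_
    exact_mod_cast Nat.cast_le.mpr hrm
  · -- holomorphic coefficients
    intro k
    by_cases hk : k ≤ m
    · have heq : (fun z => (XiLift l δ m h z).coeff k) = fun z =>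
          (m.factorial : ℂ) * zfact (l + 2 * (δ : ℤ) - 1) * deriv^[m - k] h z /
            ((k.factorial : ℂ) * ((m - k).factorial : ℂ) *
              zfact ((m : ℤ) - (k : ℤ) + 2 * (δ : ℤ) + l - 1)) := by
        funext z
        rw [Stmt13Aux.xilift_coeff, if_pos hk]
      rw [Hol, heq]
      exact DifferentiableOn.div_const ((hdiff (m - k)).const_mul _) _
    · have heq : (fun z => (XiLift l δ m h z).coeff k) = fun _ => (0 : ℂ) := by
        funext z
        rw [Stmt13Aux.xilift_coeff, if_neg hk]
      rw [Hol, heq]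
      exact differentiableOn_const 0
  · -- quasimodular transformation
    intro γ hγ z hz
    have hJ := Stmt13Aux.jJ_ne (γ := γ) hz
    have hA := Stmt13Aux.lemA h hhol (l + 2 * (δ : ℤ)) hl γ (htrans γ hγ)
    simp only [polyAct]
    rw [Stmt13Aux.xilift_eq l δ hl m h (mact γ z), Stmt13Aux.xilift_eq l δ hl m h z]
    rw [Polynomial.sum_comp]
    simp only [Polynomial.mul_comp, Polynomial.C_comp, Polynomial.pow_comp, Polynomial.X_comp]
    rw [Finset.mul_sum]
    have hcollect : ∀ (a0 a1 b : ℂ) (P : Polynomial ℂ),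
        Polynomial.C a0 * (Polynomial.C a1 * (Polynomial.C b * P)) =
          Polynomial.C (a0 * a1 * b) * P := by
      intro a0 a1 b P
      rw [Polynomial.C_mul, Polynomial.C_mul]
      ring
    have hstep : ∀ r ∈ Finset.range (m + 1),
        Polynomial.C (jJ γ z ^ (-(l + 2 * (m : ℤ) + 2 * (δ : ℤ)))) *
          (Polynomial.C (Stmt13Aux.Cc (l + 2 * (δ : ℤ) - 1).toNat r (m - r) * deriv^[m - r] h (mact γ z)) *
            (Polynomial.C (jJ γ z ^ 2) * (Polynomial.X - Polynomial.C (kK γ z))) ^ r)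
        = Polynomial.C (Stmt13Aux.Cc (l + 2 * (δ : ℤ) - 1).toNat r (m - r) *
            ∑ p ∈ Finset.range (m - r + 1),
              Stmt13Aux.Bc (l + 2 * (δ : ℤ) - 1).toNat p (m - r - p) * kK γ z ^ p *
                deriv^[m - r - p] h z) *
          (Polynomial.X - Polynomial.C (kK γ z)) ^ r := by
      intro r hr
      have hrm : r ≤ m := by have := Finset.mem_range.mp hr; omega
      rw [hA (m - r) z hz]
      rw [mul_pow, ← Polynomial.C_pow, hcollect]
      congr 1
      apply congrArg Polynomial.C ?_
      have hpow : jJ γ z ^ (-(l + 2 * (m : ℤ) + 2 * (δ : ℤ)))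
          * jJ γ z ^ (2 * ((m - r : ℕ) : ℤ) + (l + 2 * (δ : ℤ)))
          * (jJ γ z ^ 2) ^ r = 1 := by
        rw [← pow_mul, ← zpow_natCast (jJ γ z) (2 * r), ← zpow_add₀ hJ, ← zpow_add₀ hJ]
        rw [show -(l + 2 * (m : ℤ) + 2 * (δ : ℤ)) + (2 * ((m - r : ℕ) : ℤ) + (l + 2 * (δ : ℤ)))
            + ((2 * r : ℕ) : ℤ) = 0 by push_cast [Nat.cast_sub hrm]; ring]
        exact zpow_zero _
      calc jJ γ z ^ (-(l + 2 * (m : ℤ) + 2 * (δ : ℤ))) *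
            (Stmt13Aux.Cc (l + 2 * (δ : ℤ) - 1).toNat r (m - r) *
              ((∑ p ∈ Finset.range (m - r + 1),
                Stmt13Aux.Bc (l + 2 * (δ : ℤ) - 1).toNat p (m - r - p) * kK γ z ^ p *
                  deriv^[m - r - p] h z)
                * jJ γ z ^ (2 * ((m - r : ℕ) : ℤ) + (l + 2 * (δ : ℤ))))) * (jJ γ z ^ 2) ^ r
          = Stmt13Aux.Cc (l + 2 * (δ : ℤ) - 1).toNat r (m - r) *
              (∑ p ∈ Finset.range (m - r + 1),
                Stmt13Aux.Bc (l + 2 * (δ : ℤ) - 1).toNat p (m - r - p) * kK γ z ^ p *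
                  deriv^[m - r - p] h z)
              * (jJ γ z ^ (-(l + 2 * (m : ℤ) + 2 * (δ : ℤ)))
                * jJ γ z ^ (2 * ((m - r : ℕ) : ℤ) + (l + 2 * (δ : ℤ))) * (jJ γ z ^ 2) ^ r) := by
            ring
        _ = _ := by rw [hpow, mul_one]
    rw [Finset.sum_congr rfl hstep]
    exact Stmt13Aux.star (l + 2 * (δ : ℤ) - 1).toNat m (kK γ z) (fun t => deriv^[t] h z)
  · -- leading coefficient
    intro z
    rw [Stmt13Aux.xilift_coeff, if_pos (le_refl m), Nat.sub_self]
    simp only [Function.iterate_zero, id_eq, Nat.factorial_zero, Nat.cast_one]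
    rw [show (m : ℤ) - (m : ℤ) + 2 * (δ : ℤ) + l - 1 = l + 2 * (δ : ℤ) - 1 by ring]
    rw [mul_one]
    exact mul_div_cancel_left₀ _ (mul_ne_zero (Stmt13Aux.fact_ne m) hzf)
end
end
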